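/- (Proposition 1.) Let k, n₁, n₂ be natural numbers with k < n₁ and k < n₂. Let G₁ ∈ 𝔽₂^{k×n₁} and G₂ ∈ 𝔽₂^{k×n₂}, let H₁ ∈ 𝔽₂^{(n₁−k)×n₁} satisfy H₁·G₁ᵀ = 0, let H₂ ∈ 𝔽₂^{(n₂−k)×n₂} satisfy H₂·G₂ᵀ = 0, and let A ∈ 𝔽₂^{k×n₁}, B ∈ 𝔽₂^{k×n₂} satisfy G₁·Aᵀ + G₂·Bᵀ = 0. Let S ∈ 𝔽₂^{k×k} be invertible and let P be an (n₁+n₂)×(n₁+n₂) permutation matrix. Then the matrix H′ = [[H₁, 0], [0, H₂], [A, B]] · P (the vertical juxtaposition of the block rows (H₁ | 0), (0 | H₂) and (A | B), multiplied on the right by P) satisfies H′ · G_pubᵀ = 0, where G_pub = S · (G₁ | G₂) · P; that is, every row of H′ lies in the dual code of the code generated by the rows of G_pub. -/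

import Mathlib

open Matrix

lemma permMatrix_mul_transpose {n R : Type*} [DecidableEq n] [Fintype n] [Semiring R]
    (σ : Equiv.Perm n) : σ.permMatrix R * (σ.permMatrix R)ᵀ = 1 := by
  rw [Equiv.Perm.permMatrix, ← PEquiv.toMatrix_symm, ← Equiv.toPEquiv_symm,
    ← PEquiv.toMatrix_trans, ← Equiv.toPEquiv_trans]
  simp

/-- Proposition 1: the vertical juxtaposition of the block rows `(H₁ | 0)`, `(0 | H₂)` and
`(A | B)`, multiplied on the right by the permutation matrix `P`, is a parity-check matrix
of the public code generated by `G_pub = S·(G₁ | G₂)·P`, i.e. `H′ · G_pubᵀ = 0`. -/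
theorem parity_check_of_public_code (k n₁ n₂ : ℕ) (hk₁ : k < n₁) (hk₂ : k < n₂)
    (G₁ : Matrix (Fin k) (Fin n₁) (ZMod 2)) (G₂ : Matrix (Fin k) (Fin n₂) (ZMod 2))
    (H₁ : Matrix (Fin (n₁ - k)) (Fin n₁) (ZMod 2))
    (H₂ : Matrix (Fin (n₂ - k)) (Fin n₂) (ZMod 2))
    (A : Matrix (Fin k) (Fin n₁) (ZMod 2)) (B : Matrix (Fin k) (Fin n₂) (ZMod 2))
    (hH₁ : H₁ * G₁ᵀ = 0) (hH₂ : H₂ * G₂ᵀ = 0) (hAB : G₁ * Aᵀ + G₂ * Bᵀ = 0)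
    (S : Matrix (Fin k) (Fin k) (ZMod 2)) (hS : IsUnit S)
    (P : Matrix (Fin n₁ ⊕ Fin n₂) (Fin n₁ ⊕ Fin n₂) (ZMod 2))
    (hP : ∃ σ : Equiv.Perm (Fin n₁ ⊕ Fin n₂), P = σ.permMatrix (ZMod 2)) :
    (fromRows (fromRows (fromCols H₁ 0) (fromCols 0 H₂)) (fromCols A B) * P)
      * (S * fromCols G₁ G₂ * P)ᵀ = 0 := by
  obtain ⟨σ, rfl⟩ := hP
  have hABt : A * G₁ᵀ + B * G₂ᵀ = 0 := by
    have := congrArg Matrix.transpose hAB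
    simpa [Matrix.transpose_add, Matrix.transpose_mul] using this
  rw [Matrix.transpose_mul, Matrix.transpose_mul, Matrix.mul_assoc,
    ← Matrix.mul_assoc (σ.permMatrix (ZMod 2)), permMatrix_mul_transpose, Matrix.one_mul,
    ← Matrix.mul_assoc]
  have key : fromRows (fromRows (fromCols H₁ 0) (fromCols 0 H₂)) (fromCols A B) *
      (fromCols G₁ G₂)ᵀ = 0 := by
    rw [transpose_fromCols, fromRows_mul, fromRows_mul,
      fromCols_mul_fromRows, fromCols_mul_fromRows, fromCols_mul_fromRows]
    simp [hH₁, hH₂, hABt]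
  rw [key, Matrix.zero_mul]
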